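/- Let 0 < β₁₁₁ < 1, 0 < β₂₁ < 1 with λ₁ := β₁₁₁/β₂₁ < 1, and let (β_{11j})_{j≥1} satisfy 0 ≤ β_{11j} ≤ β₁₁₁ for all j. Let g_{1,1}, …, g_{1,t} ∈ ℝⁿ, define m_{1,t} = β_{11t} m_{1,t−1} + (1−β_{11t}) g_{1,t} with m_{1,0} = 0, and let v̂_{1,t} ∈ ℝⁿ satisfy, coordinatewise, v̂_{1,t} ≥ (1−β₂₁) Σ_{j=1}^t β₂₁^{t−j} g_{1,j} ⊙ g_{1,j}. Then ‖(1/√v̂_{1,t}) ⊙ m_{1,t}‖² ≤ n / ( (1−β₁₁₁)(1−β₂₁)(1−λ₁) ), where coordinates with v̂_{1,t} = 0 are interpreted as 0. -/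

import Mathlib

open Finset

/-- Lemma 5, bound (2) of the paper.  With time-varying decay
parameters `0 ≤ β_{11j} ≤ β₁₁₁`, the first-moment recursion
`m_{1,t} = β_{11t} m_{1,t−1} + (1−β_{11t}) g_{1,t}` (started at `0`), and any
`v̂_{1,t}` dominating coordinatewise the exponential moving average
`(1−β₂₁) Σ_{j=1}^t β₂₁^{t−j} g_{1,j} ⊙ g_{1,j}`, if `λ₁ = β₁₁₁/β₂₁ < 1` then
`‖(1/√v̂_{1,t}) ⊙ m_{1,t}‖² ≤ n/((1−β₁₁₁)(1−β₂₁)(1−λ₁))`.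
(Coordinates with `v̂_{1,t} = 0` contribute `0`; Lean's division by zero is zero.) -/

lemma m_repr_aux {n : ℕ} (β : ℕ → ℝ) (g m : ℕ → Fin n → ℝ) (hm0 : ∀ i, m 0 i = 0)
    (hm : ∀ j i, m (j + 1) i = β (j + 1) * m j i + (1 - β (j + 1)) * g (j + 1) i) :
    ∀ t i, m t i = ∑ j ∈ Finset.Icc 1 t, ((1 - β j) * ∏ k ∈ Finset.Icc (j+1) t, β k) * g j i := by
  intro t
  induction t with
  | zero => intro i; simp [hm0]
  | succ t ih =>
    intro i
    rw [hm, ih, Finset.sum_Icc_succ_top (by omega : 1 ≤ t+1), Finset.mul_sum]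
    congr 1
    · apply Finset.sum_congr rfl
      intro j hj
      have hj' : j ≤ t := (Finset.mem_Icc.mp hj).2
      rw [Finset.prod_Icc_succ_top (by omega : j+1 ≤ t+1)]
      ring
    · rw [Finset.Icc_eq_empty (by omega : ¬ (t+1)+1 ≤ t+1)]
      simp


theorem dnnAdam_first_moment_normalized_bound
    (n t : ℕ)
    (β₁₁₁ β₂₁ : ℝ) (hβ₁ : 0 < β₁₁₁) (hβ₁' : β₁₁₁ < 1) (hβ₂ : 0 < β₂₁) (hβ₂' : β₂₁ < 1)
    (hlam : β₁₁₁ / β₂₁ < 1)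
    (β : ℕ → ℝ) (hβ0 : ∀ j, 0 ≤ β j) (hβub : ∀ j, β j ≤ β₁₁₁)
    (g : ℕ → Fin n → ℝ)
    (m : ℕ → Fin n → ℝ) (hm0 : ∀ i, m 0 i = 0)
    (hm : ∀ j i, m (j + 1) i = β (j + 1) * m j i + (1 - β (j + 1)) * g (j + 1) i)
    (vhat : Fin n → ℝ)
    (hvhat : ∀ i, (1 - β₂₁) * ∑ j ∈ Finset.Icc 1 t, β₂₁ ^ (t - j) * (g j i) ^ 2 ≤ vhat i) :
    ∑ i, (m t i / Real.sqrt (vhat i)) ^ 2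
      ≤ (n : ℝ) / ((1 - β₁₁₁) * (1 - β₂₁) * (1 - β₁₁₁ / β₂₁)) := by
  set L : ℝ := β₁₁₁ / β₂₁ with hLdef
  have hL0 : 0 < L := div_pos hβ₁ hβ₂
  have hL1 : L < 1 := hlam
  have h1 : (0:ℝ) < 1 - β₁₁₁ := by linarith
  have h2 : (0:ℝ) < 1 - β₂₁ := by linarith
  have h3 : (0:ℝ) < 1 - L := by linarith
  set c : ℕ → ℝ := fun j => (1 - β j) * ∏ k ∈ Finset.Icc (j+1) t, β k with hcdef
  have hrepr : ∀ i, m t i = ∑ j ∈ Finset.Icc 1 t, c j * g j i :=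
    m_repr_aux β g m hm0 hm t
  have hc0 : ∀ j, 0 ≤ c j := by
    intro j
    apply mul_nonneg (by linarith [hβub j])
    exact Finset.prod_nonneg fun k _ => hβ0 k
  have hcub : ∀ j ∈ Finset.Icc 1 t, c j ≤ β₁₁₁ ^ (t - j) := by
    intro j hj
    have hj' := Finset.mem_Icc.mp hj
    have h4 : ∏ k ∈ Finset.Icc (j+1) t, β k ≤ β₁₁₁ ^ (t - j) := by
      calc ∏ k ∈ Finset.Icc (j+1) t, β k ≤ ∏ k ∈ Finset.Icc (j+1) t, β₁₁₁ :=
            Finset.prod_le_prod (fun k _ => hβ0 k) (fun k _ => hβub k)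
        _ = β₁₁₁ ^ (t - j) := by
            rw [Finset.prod_const, Nat.card_Icc]
            congr 1
            omega
    calc c j ≤ 1 * ∏ k ∈ Finset.Icc (j+1) t, β k := by
          apply mul_le_mul_of_nonneg_right (by linarith [hβ0 j])
          exact Finset.prod_nonneg fun k _ => hβ0 k
      _ = ∏ k ∈ Finset.Icc (j+1) t, β k := one_mul _
      _ ≤ β₁₁₁ ^ (t - j) := h4
  -- per-coordinate bound
  have hcoord : ∀ i, (m t i / Real.sqrt (vhat i)) ^ 2
      ≤ 1 / ((1 - β₁₁₁) * (1 - β₂₁) * (1 - L)) := by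
    intro i
    rcases le_or_gt (vhat i) 0 with hv | hv
    · -- all g j i = 0 on Icc 1 t
      have hS : ∑ j ∈ Finset.Icc 1 t, β₂₁ ^ (t - j) * (g j i) ^ 2 ≤ 0 := by
        nlinarith [hvhat i]
      have hS0 : ∑ j ∈ Finset.Icc 1 t, β₂₁ ^ (t - j) * (g j i) ^ 2 = 0 := by
        refine le_antisymm hS (Finset.sum_nonneg fun j _ => ?_)
        positivity
      have hg0 : ∀ j ∈ Finset.Icc 1 t, g j i = 0 := by
        intro j hj
        have := (Finset.sum_eq_zero_iff_of_nonneg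
          (fun k _ => by positivity)).mp hS0 j hj
        have hp : (0:ℝ) < β₂₁ ^ (t - j) := pow_pos hβ₂ _
        have h6 : (g j i) ^ 2 = 0 := (mul_eq_zero.mp this).resolve_left (ne_of_gt hp)
        exact pow_eq_zero_iff (by norm_num) |>.mp h6
      have hm0' : m t i = 0 := by
        rw [hrepr i]
        exact Finset.sum_eq_zero fun j hj => by rw [hg0 j hj, mul_zero]
      rw [hm0']
      simp
      positivity
    · -- main case vhat i > 0
      have hvs : Real.sqrt (vhat i) ^ 2 = vhat i := Real.sq_sqrt hv.le
      have hvne : vhat i ≠ 0 := ne_of_gt hv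
      -- Cauchy-Schwarz
      have hcs : (m t i) ^ 2 ≤ (∑ j ∈ Finset.Icc 1 t, c j)
          * ∑ j ∈ Finset.Icc 1 t, c j * (g j i) ^ 2 := by
        have := Finset.sum_mul_sq_le_sq_mul_sq (Finset.Icc 1 t)
          (fun j => Real.sqrt (c j)) (fun j => Real.sqrt (c j) * g j i)
        have e1 : ∀ j, Real.sqrt (c j) * (Real.sqrt (c j) * g j i) = c j * g j i := by
          intro j
          rw [← mul_assoc, Real.mul_self_sqrt (hc0 j)]
        have e2 : ∀ j, Real.sqrt (c j) ^ 2 = c j := fun j => Real.sq_sqrt (hc0 j)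
        have e3 : ∀ j, (Real.sqrt (c j) * g j i) ^ 2 = c j * (g j i) ^ 2 := by
          intro j
          rw [mul_pow, e2]
        simp only [e1, e2, e3] at this
        rw [hrepr i]
        exact this
      -- sum of coefficients
      have hsumc : ∑ j ∈ Finset.Icc 1 t, c j ≤ 1 / (1 - β₁₁₁) := by
        have hre : ∑ j ∈ Finset.Icc 1 t, β₁₁₁ ^ (t - j) = ∑ k ∈ Finset.range t, β₁₁₁ ^ k := by
          apply Finset.sum_nbij' (fun j => t - j) (fun k => t - k)
          · intro j hj; simp only [Finset.mem_Icc] at hj; simp only [Finset.mem_range]; omega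
          · intro k hk; simp only [Finset.mem_range] at hk; simp only [Finset.mem_Icc]; omega
          · intro j hj; simp only [Finset.mem_Icc] at hj; omega
          · intro k hk; simp only [Finset.mem_range] at hk; omega
          · intro j _; rfl
        have hgm : (∑ k ∈ Finset.range t, β₁₁₁ ^ k) * (β₁₁₁ - 1) = β₁₁₁ ^ t - 1 :=
          geom_sum_mul β₁₁₁ t
        have hgeo : ∑ k ∈ Finset.range t, β₁₁₁ ^ k ≤ 1 / (1 - β₁₁₁) := by
          rw [le_div_iff₀ h1]
          nlinarith [pow_nonneg hβ₁.le t]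
        calc ∑ j ∈ Finset.Icc 1 t, c j ≤ ∑ j ∈ Finset.Icc 1 t, β₁₁₁ ^ (t - j) :=
              Finset.sum_le_sum hcub
          _ = ∑ k ∈ Finset.range t, β₁₁₁ ^ k := hre
          _ ≤ 1 / (1 - β₁₁₁) := hgeo
      -- weighted sum of squares
      have hterm : ∀ j ∈ Finset.Icc 1 t,
          c j * (g j i) ^ 2 ≤ L ^ (t - j) * (vhat i / (1 - β₂₁)) := by
        intro j hj
        have hsingle : β₂₁ ^ (t - j) * (g j i) ^ 2 ≤ vhat i / (1 - β₂₁) := by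
          rw [le_div_iff₀ h2]
          have h5 : β₂₁ ^ (t - j) * (g j i) ^ 2
              ≤ ∑ k ∈ Finset.Icc 1 t, β₂₁ ^ (t - k) * (g k i) ^ 2 :=
            Finset.single_le_sum (f := fun k => β₂₁ ^ (t - k) * (g k i) ^ 2)
              (fun k _ => by positivity) hj
          nlinarith [hvhat i]
        have hb : β₁₁₁ ^ (t - j) = L ^ (t - j) * β₂₁ ^ (t - j) := by
          rw [hLdef, div_pow, div_mul_cancel₀]
          exact pow_ne_zero _ (ne_of_gt hβ₂)
        calc c j * (g j i) ^ 2 ≤ β₁₁₁ ^ (t - j) * (g j i) ^ 2 := by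
              apply mul_le_mul_of_nonneg_right (hcub j hj) (by positivity)
          _ = L ^ (t - j) * (β₂₁ ^ (t - j) * (g j i) ^ 2) := by rw [hb]; ring
          _ ≤ L ^ (t - j) * (vhat i / (1 - β₂₁)) := by
              apply mul_le_mul_of_nonneg_left hsingle (by positivity)
      have hsumsq : ∑ j ∈ Finset.Icc 1 t, c j * (g j i) ^ 2
          ≤ (1 / (1 - L)) * (vhat i / (1 - β₂₁)) := by
        calc ∑ j ∈ Finset.Icc 1 t, c j * (g j i) ^ 2
            ≤ ∑ j ∈ Finset.Icc 1 t, L ^ (t - j) * (vhat i / (1 - β₂₁)) :=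
              Finset.sum_le_sum hterm
          _ = (∑ j ∈ Finset.Icc 1 t, L ^ (t - j)) * (vhat i / (1 - β₂₁)) := by
              rw [Finset.sum_mul]
          _ ≤ (1 / (1 - L)) * (vhat i / (1 - β₂₁)) := by
              apply mul_le_mul_of_nonneg_right _ (by positivity)
              have hre : ∑ j ∈ Finset.Icc 1 t, L ^ (t - j) = ∑ k ∈ Finset.range t, L ^ k := by
                apply Finset.sum_nbij' (fun j => t - j) (fun k => t - k)
                · intro j hj; simp only [Finset.mem_Icc] at hj; simp only [Finset.mem_range]; omega
                · intro k hk; simp only [Finset.mem_range] at hk; simp only [Finset.mem_Icc]; omega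
                · intro j hj; simp only [Finset.mem_Icc] at hj; omega
                · intro k hk; simp only [Finset.mem_range] at hk; omega
                · intro j _; rfl
              rw [hre]
              have hgm : (∑ k ∈ Finset.range t, L ^ k) * (L - 1) = L ^ t - 1 :=
                geom_sum_mul L t
              rw [le_div_iff₀ h3]
              nlinarith [pow_nonneg hL0.le t]
      -- combine
      have hmain : (m t i) ^ 2 ≤ (1 / (1 - β₁₁₁)) * ((1 / (1 - L)) * (vhat i / (1 - β₂₁))) := by
        calc (m t i) ^ 2 ≤ (∑ j ∈ Finset.Icc 1 t, c j)
              * ∑ j ∈ Finset.Icc 1 t, c j * (g j i) ^ 2 := hcs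
          _ ≤ (1 / (1 - β₁₁₁)) * ((1 / (1 - L)) * (vhat i / (1 - β₂₁))) := by
              apply mul_le_mul hsumc hsumsq
              · exact Finset.sum_nonneg fun j _ => mul_nonneg (hc0 j) (by positivity)
              · positivity
      rw [div_pow, hvs, div_le_iff₀ hv]
      calc (m t i) ^ 2 ≤ (1 / (1 - β₁₁₁)) * ((1 / (1 - L)) * (vhat i / (1 - β₂₁))) := hmain
        _ = 1 / ((1 - β₁₁₁) * (1 - β₂₁) * (1 - L)) * vhat i := by
            field_simp
  calc ∑ i, (m t i / Real.sqrt (vhat i)) ^ 2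
      ≤ ∑ _i : Fin n, 1 / ((1 - β₁₁₁) * (1 - β₂₁) * (1 - L)) :=
        Finset.sum_le_sum fun i _ => hcoord i
    _ = (n : ℝ) / ((1 - β₁₁₁) * (1 - β₂₁) * (1 - L)) := by
        rw [Finset.sum_const, Finset.card_univ, Fintype.card_fin, nsmul_eq_mul, mul_one_div]
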